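/- Let P be a totally ordered set and V a pointwise finite dimensional persistence module indexed by P. Assume P has a maximal element z and V_z ≠ 0. Let B be a basis of V_z compatible with the flag of images of V at z, and let v ∈ B. Then there exists an internal direct sum decomposition V = U ⊕ W such that: (1) U is an interval module; (2) {v} is a basis of U_z; (3) B − {v} is a basis of W_z. -/

import Mathlib

universe u v w w'

/-- A persistence module indexed by a poset `P`, over a field `k`. -/
structure PersMod (k : Type u) [Field k] (P : Type v) [PartialOrder P] :
    Type (max u v (w + 1)) where
  space : P → Type w
  [acg : ∀ x, AddCommGroup (space x)]
  [mod : ∀ x, Module k (space x)]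
  map : ∀ {x y : P}, x ≤ y → (space x →ₗ[k] space y)
  map_id : ∀ x : P, map (le_refl x) = LinearMap.id
  map_comp : ∀ {x y z : P} (hxy : x ≤ y) (hyz : y ≤ z),
    (map hyz).comp (map hxy) = map (hxy.trans hyz)

attribute [instance] PersMod.acg PersMod.mod

variable (k : Type u) [Field k] {P : Type v} [PartialOrder P]

/-- A morphism of persistence modules (a natural transformation). -/
structure PersHom (V : PersMod.{u, v, w} k P) (W : PersMod.{u, v, w'} k P) where
  app : ∀ x : P, V.space x →ₗ[k] W.space x
  natural : ∀ {x y : P} (h : x ≤ y) (v : V.space x),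
    app y (V.map h v) = W.map h (app x v)

/-- An isomorphism of persistence modules. -/
structure PersIso (V : PersMod.{u, v, w} k P) (W : PersMod.{u, v, w'} k P) where
  app : ∀ x : P, V.space x ≃ₗ[k] W.space x
  natural : ∀ {x y : P} (h : x ≤ y) (v : V.space x),
    app y (V.map h v) = W.map h (app x v)

/-- A subset `I` of a poset is convex if `x ≤ y ≤ z`, `x ∈ I`, `z ∈ I` imply `y ∈ I`. -/
def IsConvexIn (I : Set P) : Prop :=
  ∀ ⦃x y z : P⦄, x ∈ I → z ∈ I → x ≤ y → y ≤ z → y ∈ I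

/-- A subset `I` of a poset is connected if any two points of `I` are joined by a
zigzag path inside `I`. -/
def IsConnectedIn (I : Set P) : Prop :=
  ∀ x ∈ I, ∀ z ∈ I, ∃ (n : ℕ) (c : ℕ → P), (∀ i ≤ n, c i ∈ I) ∧ c 0 = x ∧ c n = z ∧
    ∀ i < n, c i ≤ c (i + 1) ∨ c (i + 1) ≤ c i

/-- An interval in a poset: nonempty, convex and connected. -/
def IsPosetInterval (I : Set P) : Prop :=
  I.Nonempty ∧ IsConvexIn I ∧ IsConnectedIn I

open Classical in
/-- The subspace of `k` used as the value of the constant module at `x`. -/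
noncomputable def constSub (I : Set P) (x : P) : Submodule k k :=
  if x ∈ I then ⊤ else ⊥

open Classical in
/-- The structure map of the constant module. -/
noncomputable def constMap (I : Set P) (x y : P) :
    constSub k I x →ₗ[k] constSub k I y :=
  LinearMap.codRestrict (constSub k I y)
    ((if y ∈ I then (LinearMap.id : k →ₗ[k] k) else 0).comp (constSub k I x).subtype)
    (fun c => by
      by_cases hy : y ∈ I
      · simp [constSub, hy]
      · rw [if_neg hy]
        exact Submodule.zero_mem _)

open Classical in
/-- The constant (interval) module `M(I)` attached to a convex subset `I`. -/
noncomputable def constMod (I : Set P) (hI : IsConvexIn I) : PersMod.{u, v, u} k P where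
  space x := constSub k I x
  map {x y} _ := constMap k I x y
  map_id := fun x => by
    ext c
    by_cases hx : x ∈ I
    · simp [constMap, hx]
    · have hc : (c : k) = 0 := by
        have e : constSub k I x = ⊥ := if_neg hx
        have h2 : (c : k) ∈ (⊥ : Submodule k k) := e.le c.2
        exact (Submodule.mem_bot k).mp h2
      simp [constMap, hx, hc]
  map_comp := fun {x y z} hxy hyz => by
    ext c
    by_cases hz : z ∈ I
    · by_cases hy : y ∈ I
      · simp [constMap, hy, hz]
      · have hx : x ∉ I := fun hx => hy (hI hx hz hxy hyz)
        have hc : (c : k) = 0 := by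
          have e : constSub k I x = ⊥ := if_neg hx
          have h2 : (c : k) ∈ (⊥ : Submodule k k) := e.le c.2
          exact (Submodule.mem_bot k).mp h2
        simp [constMap, hy, hz, hc]
    · simp [constMap, hz]

/-- A submodule of a persistence module: a family of subspaces preserved by the
structure maps. -/
structure PersSubmod (V : PersMod.{u, v, w} k P) where
  carrier : ∀ x : P, Submodule k (V.space x)
  mapLe : ∀ {x y : P} (h : x ≤ y), ∀ v ∈ carrier x, V.map h v ∈ carrier y

/-- A submodule of a persistence module, viewed as a persistence module in its own
right. -/
def PersSubmod.toPersMod {V : PersMod.{u, v, w} k P} (U : PersSubmod k V) :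
    PersMod.{u, v, w} k P where
  space x := U.carrier x
  map {x y} h := (V.map h).restrict (U.mapLe h)
  map_id := fun x => by
    ext c
    simp [LinearMap.restrict_apply, V.map_id]
  map_comp := fun {x y z} hxy hyz => by
    ext c
    have := LinearMap.congr_fun (V.map_comp hxy hyz) (c : V.space x)
    simpa [LinearMap.restrict_apply] using this

/-- A persistence module is an interval module if it is isomorphic to a constant
module `M(I)` for some interval `I`. -/
def IsIntervalModule (V : PersMod.{u, v, w} k P) : Prop :=
  ∃ (I : Set P) (hI : IsPosetInterval I), Nonempty (PersIso k V (constMod k I hI.2.1))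

/-- `A` is an internal direct sum decomposition of `V`:
at each point the subspaces are independent and span everything. -/
def IsDecomp (V : PersMod.{u, v, w} k P) (A : Set (PersSubmod k V)) : Prop :=
  ∀ x : P, iSupIndep (fun U : A => (U : PersSubmod k V).carrier x) ∧
    ⨆ U : A, (U : PersSubmod k V).carrier x = ⊤

/-- An interval decomposition of `V`. -/
def IsIntervalDecomp (V : PersMod.{u, v, w} k P) (A : Set (PersSubmod k V)) : Prop :=
  IsDecomp k V A ∧ ∀ U ∈ A, IsIntervalModule k U.toPersMod

/-- `V` has an interval decomposition. -/
def HasIntervalDecomp (V : PersMod.{u, v, w} k P) : Prop :=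
  ∃ A : Set (PersSubmod k V), IsIntervalDecomp k V A

/-! ### Auxiliary development for `split_interval_at_max` -/

section SplitAux

variable {k : Type u} [Field k] {P : Type v} [LinearOrder P]
variable (V : PersMod.{u, v, w} k P) (z : P) (hz : ∀ x : P, x ≤ z) (v : V.space z)

/-- Composition of structure maps, with an arbitrary proof for the composite. -/
theorem PersMod.mapc {x y t : P} (hxy : x ≤ y) (hyt : y ≤ t) (h : x ≤ t)
    (w : V.space x) : V.map hyt (V.map hxy w) = V.map h w :=
  LinearMap.congr_fun (V.map_comp hxy hyt) w

theorem PersMod.rangec {x y t : P} (hxy : x ≤ y) (hyt : y ≤ t) (h : x ≤ t) :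
    Submodule.map (V.map hyt) (LinearMap.range (V.map hxy))
      = LinearMap.range (V.map h) := by
  rw [← LinearMap.range_comp, V.map_comp hxy hyt]

theorem PersMod.range_mono' {a b x : P} (hab : a ≤ b) (ha : a ≤ x) (hb : b ≤ x) :
    LinearMap.range (V.map ha) ≤ LinearMap.range (V.map hb) := by
  rintro t ⟨w, rfl⟩
  exact ⟨V.map hab w, V.mapc hab hb ha w⟩

/-- The support of the summand to be split off. -/
def SI : Set P := {x | v ∈ LinearMap.range (V.map (hz x))}

theorem SI_up {x y : P} (hx : x ∈ SI V z hz v) (hxy : x ≤ y) : y ∈ SI V z hz v := by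
  obtain ⟨w, hw⟩ := hx
  exact ⟨V.map hxy w, by rw [V.mapc hxy (hz y) (hz x)]; exact hw⟩

theorem z_mem_SI : z ∈ SI V z hz v :=
  ⟨v, LinearMap.congr_fun (V.map_id z) v⟩

/-- Candidate submodules for the eventual image at `x`. -/
def cand (x : P) : Set (Submodule k (V.space x)) :=
  {R | ∃ a, ∃ h : a ≤ x, a ∈ SI V z hz v ∧ R = LinearMap.range (V.map h)}

theorem cand_nonempty {x : P} (hx : x ∈ SI V z hz v) :
    (cand V z hz v x).Nonempty :=
  ⟨_, x, le_refl x, hx, rfl⟩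

theorem exists_finrank_min {M : Type w} [AddCommGroup M] [Module k M]
    (s : Set (Submodule k M)) (hs : s.Nonempty) :
    ∃ R, R ∈ s ∧ ∀ R' ∈ s, Module.finrank k R ≤ Module.finrank k R' := by
  have ht : ((fun R : Submodule k M => Module.finrank k R) '' s).Nonempty :=
    hs.image _
  obtain ⟨R, hR, hn⟩ := Nat.sInf_mem ht
  refine ⟨R, hR, fun R' hR' => ?_⟩
  calc Module.finrank k R = _ := hn
    _ ≤ Module.finrank k R' := Nat.sInf_le ⟨R', hR', rfl⟩

open Classical in
/-- The eventual image at `x` (over points of `SI`). -/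
noncomputable def EI (x : P) : Submodule k (V.space x) :=
  if hx : (cand V z hz v x).Nonempty then
    (exists_finrank_min (cand V z hz v x) hx).choose
  else ⊥

theorem EI_spec {x : P} (hx : (cand V z hz v x).Nonempty) :
    EI V z hz v x ∈ cand V z hz v x ∧
      ∀ R' ∈ cand V z hz v x,
        Module.finrank k (EI V z hz v x) ≤ Module.finrank k R' := by
  rw [EI, dif_pos hx]
  exact (exists_finrank_min (cand V z hz v x) hx).choose_spec

theorem EI_le (hfd : ∀ x : P, FiniteDimensional k (V.space x))
    {x a : P} (h : a ≤ x) (ha : a ∈ SI V z hz v) :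
    EI V z hz v x ≤ LinearMap.range (V.map h) := by
  haveI := hfd x
  have hx : x ∈ SI V z hz v := SI_up V z hz v ha h
  obtain ⟨hE, hmin⟩ := EI_spec V z hz v (cand_nonempty V z hz v hx)
  obtain ⟨a', h', ha', hEeq⟩ := hE
  rcases le_total a a' with hc | hc
  · have hsub : LinearMap.range (V.map h) ≤ EI V z hz v x := by
      rw [hEeq]; exact V.range_mono' hc h h'
    have := Submodule.eq_of_le_of_finrank_le hsub
      (hmin _ ⟨a, h, ha, rfl⟩)
    rw [this]
  · rw [hEeq]; exact V.range_mono' hc h' h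

theorem EI_cand {x : P} (hx : x ∈ SI V z hz v) :
    ∃ a, ∃ h : a ≤ x, a ∈ SI V z hz v ∧
      EI V z hz v x = LinearMap.range (V.map h) :=
  (EI_spec V z hz v (cand_nonempty V z hz v hx)).1

theorem map_EI (hfd : ∀ x : P, FiniteDimensional k (V.space x))
    {x y : P} (hxy : x ≤ y) (hx : x ∈ SI V z hz v) :
    Submodule.map (V.map hxy) (EI V z hz v x) = EI V z hz v y := by
  have hy : y ∈ SI V z hz v := SI_up V z hz v hx hxy
  obtain ⟨a, h, ha, hEx⟩ := EI_cand V z hz v hx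
  have hay : a ≤ y := h.trans hxy
  rw [hEx, V.rangec h hxy hay]
  refine le_antisymm ?_ (EI_le V z hz v hfd hay ha)
  obtain ⟨b, h', hb, hEy⟩ := EI_cand V z hz v hy
  rcases le_total a b with hc | hc
  · rw [hEy]; exact V.range_mono' hc hay h'
  · have hbx : b ≤ x := hc.trans h
    have hEbx : LinearMap.range (V.map hbx) = EI V z hz v x := by
      refine le_antisymm ?_ (EI_le V z hz v hfd hbx hb)
      rw [hEx]; exact V.range_mono' hc hbx h
    rw [hEy, ← V.rangec hbx hxy h', hEbx, hEx, V.rangec h hxy hay]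

theorem v_mem_EIz : v ∈ EI V z hz v z := by
  obtain ⟨a, h, ha, hEz⟩ := EI_cand V z hz v (z_mem_SI V z hz v)
  rw [hEz]; exact ha

/-- A partial compatible section over an up-closed subset of `SI`. -/
def Sect (s : Set P × ∀ x : P, V.space x) : Prop :=
  s.1 ⊆ SI V z hz v ∧ (∀ ⦃x y : P⦄, x ∈ s.1 → x ≤ y → y ∈ s.1) ∧
    z ∈ s.1 ∧ s.2 z = v ∧ (∀ x ∈ s.1, s.2 x ∈ EI V z hz v x) ∧
    ∀ ⦃x y : P⦄ (h : x ≤ y), x ∈ s.1 → y ∈ s.1 → V.map h (s.2 x) = s.2 y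

/-- Extension order on partial sections. -/
def SectLE (s t : Set P × ∀ x : P, V.space x) : Prop :=
  s.1 ⊆ t.1 ∧ ∀ x ∈ s.1, s.2 x = t.2 x

set_option maxHeartbeats 1000000 in
/-- A global compatible section of the eventual images over `SI`, taking value `v`
at `z`. -/
theorem exists_global_section (hfd : ∀ x : P, FiniteDimensional k (V.space x)) :
    ∃ u : ∀ x : P, V.space x, u z = v ∧
      (∀ x ∈ SI V z hz v, u x ∈ EI V z hz v x) ∧
      ∀ ⦃x y : P⦄ (h : x ≤ y), x ∈ SI V z hz v → V.map h (u x) = u y := by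
  classical
  have hvrefl : V.map (le_refl z) v = v := LinearMap.congr_fun (V.map_id z) v
  -- the base section, supported on `{z}`
  have hbase : Sect V z hz v ({x | z ≤ x}, fun x => if h : z ≤ x then V.map h v else 0) := by
    refine ⟨fun x hx => SI_up V z hz v (z_mem_SI V z hz v) hx,
      fun x y hx hxy => hx.trans hxy, le_refl z, ?_, ?_, ?_⟩
    · show (if h : z ≤ z then V.map h v else 0) = v
      rw [dif_pos (le_refl z)]; exact hvrefl
    · intro x hx
      show (if h : z ≤ x then V.map h v else 0) ∈ EI V z hz v x
      rw [dif_pos (show z ≤ x from hx)]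
      rw [← map_EI V z hz v hfd (show z ≤ x from hx) (z_mem_SI V z hz v)]
      exact ⟨v, v_mem_EIz V z hz v, rfl⟩
    · intro a b h ha hb
      show V.map h (if h' : z ≤ a then V.map h' v else 0)
        = (if h' : z ≤ b then V.map h' v else 0)
      rw [dif_pos (show z ≤ a from ha), dif_pos (show z ≤ b from hb)]
      exact V.mapc ha h hb v
  haveI : Nonempty {s : Set P × (∀ x : P, V.space x) // Sect V z hz v s} := ⟨⟨_, hbase⟩⟩
  have hub : ∀ c : Set {s : Set P × (∀ x : P, V.space x) // Sect V z hz v s},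
      IsChain (fun s t => SectLE V s.1 t.1) c → c.Nonempty →
      ∃ ub : {s : Set P × (∀ x : P, V.space x) // Sect V z hz v s},
        ∀ a ∈ c, SectLE V a.1 ub.1 := by
    intro c hc hne
    have key : ∀ s t, s ∈ c → t ∈ c → ∀ x, x ∈ s.1.1 → x ∈ t.1.1 →
        s.1.2 x = t.1.2 x := by
      intro s t hs ht x hxs hxt
      rcases eq_or_ne s t with rfl | hst
      · rfl
      · rcases hc hs ht hst with h | h
        · exact h.2 x hxs
        · exact (h.2 x hxt).symm
    refine ⟨⟨⟨{x | ∃ s, s ∈ c ∧ x ∈ s.1.1},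
      fun x => if h : ∃ s, s ∈ c ∧ x ∈ s.1.1 then h.choose.1.2 x else 0⟩, ?_⟩, ?_⟩
    · obtain ⟨s₀, hs₀⟩ := hne
      have agree : ∀ s (_ : s ∈ c) x (hx : x ∈ s.1.1),
          (if h : ∃ s, s ∈ c ∧ x ∈ s.1.1 then h.choose.1.2 x else 0) = s.1.2 x := by
        intro s hs x hx
        have hex : ∃ t, t ∈ c ∧ x ∈ t.1.1 := ⟨s, hs, hx⟩
        rw [dif_pos hex]
        exact key _ _ hex.choose_spec.1 hs x hex.choose_spec.2 hx
      refine ⟨?_, ?_, ?_, ?_, ?_, ?_⟩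
      · rintro x ⟨s, hs, hx⟩; exact s.2.1 hx
      · rintro x y ⟨s, hs, hx⟩ hxy; exact ⟨s, hs, s.2.2.1 hx hxy⟩
      · exact ⟨s₀, hs₀, s₀.2.2.2.1⟩
      · show (if h : ∃ s, s ∈ c ∧ z ∈ s.1.1 then h.choose.1.2 z else 0) = v
        rw [agree s₀ hs₀ z s₀.2.2.2.1]
        exact s₀.2.2.2.2.1
      · rintro x ⟨s, hs, hx⟩
        show (if h : ∃ s, s ∈ c ∧ x ∈ s.1.1 then h.choose.1.2 x else 0) ∈ _
        rw [agree s hs x hx]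
        exact s.2.2.2.2.2.1 x hx
      · rintro x y h ⟨s, hs, hx⟩ ⟨t, ht, hy⟩
        show V.map h (if hh : ∃ s, s ∈ c ∧ x ∈ s.1.1 then hh.choose.1.2 x else 0)
          = (if hh : ∃ s, s ∈ c ∧ y ∈ s.1.1 then hh.choose.1.2 y else 0)
        rcases eq_or_ne s t with rfl | hst
        · have hys : y ∈ s.1.1 := s.2.2.1 hx h
          rw [agree s hs x hx, agree s hs y hys]
          exact s.2.2.2.2.2.2 h hx hys
        · rcases hc hs ht hst with hle | hle
          · have hxt : x ∈ t.1.1 := hle.1 hx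
            rw [agree t ht x hxt, agree t ht y hy]
            exact t.2.2.2.2.2.2 h hxt hy
          · have hys : y ∈ s.1.1 := hle.1 hy
            rw [agree s hs x hx, agree s hs y hys]
            exact s.2.2.2.2.2.2 h hx hys
    · intro s hs
      exact ⟨fun x hx => ⟨s, hs, hx⟩, fun x hx => by
        have hex : ∃ t, t ∈ c ∧ x ∈ t.1.1 := ⟨s, hs, hx⟩
        show s.1.2 x = (if h : ∃ t, t ∈ c ∧ x ∈ t.1.1 then h.choose.1.2 x else 0)
        rw [dif_pos hex]
        exact key _ _ hs hex.choose_spec.1 x hx hex.choose_spec.2⟩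
  obtain ⟨m, hm⟩ := exists_maximal_of_nonempty_chains_bounded
    (r := fun s t : {s : Set P × (∀ x : P, V.space x) // Sect V z hz v s} =>
      SectLE V s.1 t.1)
    hub (fun {a b c} hab hbc =>
      ⟨hab.1.trans hbc.1, fun x hx => (hab.2 x hx).trans (hbc.2 x (hab.1 hx))⟩)
  -- the maximal section is defined on all of `SI`
  obtain ⟨⟨J, u⟩, hS⟩ := m
  obtain ⟨hJI, hup, hzJ, huz, huE, hcompat⟩ := hS
  have hJeq : J = SI V z hz v := by
    refine Set.Subset.antisymm hJI ?_
    intro x hxI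
    by_contra hxJ
    -- every element of `J` lies above `x`
    have hxle : ∀ y ∈ J, x ≤ y := by
      intro y hy
      rcases le_total x y with h | h
      · exact h
      · exact absurd (hup hy h) hxJ
    haveI := hfd x
    -- minimize the kernel
    obtain ⟨K₀, hK₀, hKmin⟩ := exists_finrank_min
      (k := k) {K | ∃ y, ∃ h : x ≤ y, y ∈ J ∧
        K = LinearMap.ker (V.map h) ⊓ EI V z hz v x} ⟨_, z, hz x, hzJ, rfl⟩
    obtain ⟨y₀, h₀, hy₀J, hK₀eq⟩ := hK₀
    have huy₀ : u y₀ ∈ Submodule.map (V.map h₀) (EI V z hz v x) := by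
      rw [map_EI V z hz v hfd h₀ hxI]
      exact huE y₀ hy₀J
    obtain ⟨w₀, hw₀E, hw₀⟩ := huy₀
    have hkey : ∀ y (hy : y ∈ J) (h : x ≤ y), V.map h w₀ = u y := by
      intro y hy h
      rcases le_total y₀ y with hc | hc
      · rw [← V.mapc h₀ hc h w₀, hw₀]
        exact hcompat hc hy₀J hy
      · have huy : u y ∈ Submodule.map (V.map h) (EI V z hz v x) := by
          rw [map_EI V z hz v hfd h hxI]
          exact huE y hy
        obtain ⟨w', hw'E, hw'⟩ := huy
        have hKy : (LinearMap.ker (V.map h) ⊓ EI V z hz v x) = K₀ := by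
          apply Submodule.eq_of_le_of_finrank_le
          · rw [hK₀eq]
            refine inf_le_inf ?_ le_rfl
            intro t ht
            rw [LinearMap.mem_ker] at ht ⊢
            rw [← V.mapc h hc h₀ t, ht, map_zero]
          · exact hKmin _ ⟨y, h, hy, rfl⟩
        have hmem : w₀ - w' ∈ LinearMap.ker (V.map h) ⊓ EI V z hz v x := by
          rw [hKy, hK₀eq]
          refine Submodule.mem_inf.mpr ⟨?_, Submodule.sub_mem _ hw₀E hw'E⟩
          rw [LinearMap.mem_ker, map_sub, hw₀]
          have : V.map h₀ w' = u y₀ := by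
            rw [← V.mapc h hc h₀ w', hw']
            exact hcompat hc hy hy₀J
          rw [this, sub_self]
        have h0 : V.map h (w₀ - w') = 0 := hmem.1
        rw [map_sub, sub_eq_zero] at h0
        rw [h0, hw']
    -- extend the section below
    have hsect' : Sect V z hz v (J ∪ {t | x ≤ t},
        fun t => if ht : t ∈ J then u t else if h : x ≤ t then V.map h w₀ else 0) := by
      refine ⟨?_, ?_, Or.inl hzJ, ?_, ?_, ?_⟩
      · rintro t (ht | ht)
        · exact hJI ht
        · exact SI_up V z hz v hxI ht
      · rintro s t (hs | hs) hst
        · exact Or.inl (hup hs hst)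
        · exact Or.inr (hs.trans hst)
      · show (if ht : z ∈ J then u z else _) = v
        rw [dif_pos hzJ]; exact huz
      · intro t ht
        show (if ht : t ∈ J then u t else if h : x ≤ t then V.map h w₀ else 0)
          ∈ EI V z hz v t
        by_cases htJ : t ∈ J
        · rw [dif_pos htJ]; exact huE t htJ
        · have hxt : x ≤ t := (ht.resolve_left htJ : t ∈ {t | x ≤ t})
          rw [dif_neg htJ, dif_pos hxt]
          rw [← map_EI V z hz v hfd hxt hxI]
          exact ⟨w₀, hw₀E, rfl⟩
      · intro s t h hs ht
        show V.map h (if hs' : s ∈ J then u s else if h' : x ≤ s then V.map h' w₀ else 0)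
          = (if ht' : t ∈ J then u t else if h' : x ≤ t then V.map h' w₀ else 0)
        by_cases hsJ : s ∈ J
        · have htJ : t ∈ J := hup hsJ h
          rw [dif_pos hsJ, dif_pos htJ]
          exact hcompat h hsJ htJ
        · have hxs : x ≤ s := (hs.resolve_left hsJ : s ∈ {t | x ≤ t})
          rw [dif_neg hsJ, dif_pos hxs]
          by_cases htJ : t ∈ J
          · rw [dif_pos htJ, V.mapc hxs h (hxs.trans h) w₀]
            exact hkey t htJ (hxs.trans h)
          · rw [dif_neg htJ, dif_pos (hxs.trans h)]
            exact V.mapc hxs h (hxs.trans h) w₀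
    have hra := hm ⟨_, hsect'⟩ ⟨Set.subset_union_left, fun t ht => by
      show u t = (if ht' : t ∈ J then u t else _)
      rw [dif_pos ht]⟩
    exact hxJ (by
      have hxmem : x ∈ J ∪ {t | x ≤ t} := Or.inr (le_refl x)
      exact hra.1 hxmem)
  refine ⟨u, huz, ?_, ?_⟩
  · intro x hx; exact huE x (hJeq ▸ hx)
  · intro x y h hx
    exact hcompat h (hJeq ▸ hx) (hJeq ▸ SI_up V z hz v hx h)

/-- A submodule whose spaces are trivialized by a family of functionals is an
interval module. -/
theorem isIntervalModule_of (U : PersSubmod k V) (I : Set P) (hI : IsPosetInterval I)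
    (g : ∀ x : P, U.carrier x →ₗ[k] k)
    (hg0 : ∀ x, x ∉ I → U.carrier x = ⊥)
    (hginj : ∀ x, x ∈ I → Function.Injective (g x))
    (hgsurj : ∀ x, x ∈ I → Function.Surjective (g x))
    (hgnat : ∀ {x y : P} (h : x ≤ y) (w : U.carrier x),
      g y ⟨V.map h w.1, U.mapLe h w.1 w.2⟩ = g x w) :
    IsIntervalModule k U.toPersMod := by
  classical
  have hzero : ∀ x, x ∉ I → ∀ w : U.carrier x, w = 0 := by
    intro x hx w
    have h2 : (w : V.space x) ∈ (⊥ : Submodule k (V.space x)) := (hg0 x hx).le w.2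
    exact Subtype.ext (by simpa using h2)
  have hmem : ∀ x (w : U.carrier x), g x w ∈ constSub k I x := by
    intro x w
    by_cases hx : x ∈ I
    · simp [constSub, hx]
    · rw [hzero x hx w, map_zero]
      exact Submodule.zero_mem _
  refine ⟨I, hI, ⟨?_⟩⟩
  have hbij : ∀ x, Function.Bijective
      (LinearMap.codRestrict (constSub k I x) (g x) (hmem x)) := by
    intro x
    by_cases hx : x ∈ I
    · constructor
      · intro w w' hww'
        exact hginj x hx (congrArg Subtype.val hww')
      · intro t
        obtain ⟨w, hw⟩ := hgsurj x hx t.1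
        exact ⟨w, Subtype.ext hw⟩
    · constructor
      · intro w w' _
        rw [hzero x hx w, hzero x hx w']
      · intro t
        have ht : (t : k) ∈ (⊥ : Submodule k k) := by
          have h2 := t.2; simp only [constSub, if_neg hx] at h2; exact h2
        rw [Submodule.mem_bot] at ht
        exact ⟨0, Subtype.ext (by simp [ht])⟩
  refine ⟨fun x => LinearEquiv.ofBijective _ (hbij x), ?_⟩
  intro x y h w
  apply Subtype.ext
  show (LinearMap.codRestrict (constSub k I y) (g y) (hmem y)
      ((PersSubmod.toPersMod k U).map h w) : k) = (constMap k I x y _ : k)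
  erw [LinearMap.codRestrict_apply]
  by_cases hy : y ∈ I
  · have hnat : g y ((PersSubmod.toPersMod k U).map h w) = g x w := hgnat h w
    rw [hnat]
    simp only [constMap, hy, if_true, LinearMap.codRestrict_apply, LinearMap.coe_comp,
      Function.comp_apply, LinearMap.id_coe, id_eq, Submodule.coe_subtype,
      LinearEquiv.ofBijective_apply]
    rfl
  · have : (PersSubmod.toPersMod k U).map h w = 0 := hzero y hy _
    rw [this]
    erw [map_zero]
    simp [constMap, hy]
    rfl

end SplitAux

/-- Splitting off an interval summand at a maximal element: let `P` be totally
ordered with greatest element `z`, `V` pointwise finite dimensional with `V_z ≠ 0`,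
`B` a basis of `V_z` compatible with the flag of images of `V` at `z`, and `v ∈ B`.
Then `V = U ⊕ W` with `U` an interval module, `{v}` a basis of `U_z` and `B - {v}` a
basis of `W_z`. -/
theorem split_interval_at_max (P : Type v) [LinearOrder P]
    (V : PersMod.{u, v, w} k P) (hfd : ∀ x : P, FiniteDimensional k (V.space x))
    (z : P) (hz : ∀ x : P, x ≤ z) (hVz : ∃ v : V.space z, v ≠ 0)
    (B : Set (V.space z))
    (hBind : LinearIndependent k ((↑) : B → V.space z))
    (hBspan : Submodule.span k B = ⊤)
    (hBcompat : ∀ (x : P) (h : x ≤ z),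
      Submodule.span k (B ∩ LinearMap.range (V.map h)) = LinearMap.range (V.map h))
    (v : V.space z) (hv : v ∈ B) :
    ∃ U W : PersSubmod k V,
      (∀ x : P, IsCompl (U.carrier x) (W.carrier x)) ∧
      IsIntervalModule k U.toPersMod ∧
      U.carrier z = Submodule.span k {v} ∧
      W.carrier z = Submodule.span k (B \ {v}) := by
  classical
  -- the coordinate functional associated to `v` in the basis `B`
  have hBspan' : ⊤ ≤ Submodule.span k (Set.range ((↑) : B → V.space z)) := by
    rw [Subtype.range_coe]; exact hBspan.ge
  set b : Module.Basis B k (V.space z) := Module.Basis.mk hBind hBspan' with hbdef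
  set f : V.space z →ₗ[k] k := b.coord ⟨v, hv⟩ with hfdef
  have hb : ∀ t : B, b t = (t : V.space z) := fun t => by
    rw [hbdef, Module.Basis.mk_apply]
  have hfv : f v = 1 := by
    have h1 : f (b ⟨v, hv⟩) = 1 := by
      rw [hfdef, Module.Basis.coord_apply, Module.Basis.repr_self, Finsupp.single_eq_same]
    rwa [hb ⟨v, hv⟩] at h1
  have hfB : ∀ t, t ∈ B \ {v} → f t = 0 := by
    rintro t ⟨htB, htv⟩
    have hne : (⟨t, htB⟩ : B) ≠ ⟨v, hv⟩ := fun hh => htv (by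
      simpa using congrArg Subtype.val hh)
    have h1 : f (b ⟨t, htB⟩) = 0 := by
      rw [hfdef, Module.Basis.coord_apply, Module.Basis.repr_self, Finsupp.single_eq_of_ne' hne]
    rwa [hb ⟨t, htB⟩] at h1
  have hker : Submodule.span k (B \ {v}) ≤ LinearMap.ker f := by
    rw [Submodule.span_le]
    intro t ht
    rw [SetLike.mem_coe, LinearMap.mem_ker]
    exact hfB t ht
  have hsub : ∀ t : V.space z, t - f t • v ∈ Submodule.span k (B \ {v}) := by
    intro t
    have htmem : t ∈ Submodule.span k B := by rw [hBspan]; trivial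
    refine Submodule.span_induction ?_ ?_ ?_ ?_ htmem
    · intro s hs
      by_cases hsv : s = v
      · subst hsv; rw [hfv, one_smul, sub_self]; exact Submodule.zero_mem _
      · rw [hfB s ⟨hs, hsv⟩, zero_smul, sub_zero]
        exact Submodule.subset_span ⟨hs, hsv⟩
    · rw [map_zero, zero_smul, sub_zero]; exact Submodule.zero_mem _
    · intro a b _ _ ha hb'
      have hh : a + b - f (a + b) • v = (a - f a • v) + (b - f b • v) := by
        rw [map_add, add_smul]; abel
      rw [hh]; exact Submodule.add_mem _ ha hb'
    · intro r s _ hs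
      have hh : r • s - f (r • s) • v = r • (s - f s • v) := by
        rw [map_smul, smul_eq_mul, mul_smul, smul_sub]
      rw [hh]; exact Submodule.smul_mem _ _ hs
  -- the compatible section
  obtain ⟨u, huz, huE, hucompat⟩ := exists_global_section V z hz v hfd
  have hzI : z ∈ SI V z hz v := z_mem_SI V z hz v
  have huv : ∀ x, x ∈ SI V z hz v → V.map (hz x) (u x) = v := by
    intro x hx; rw [hucompat (hz x) hx, huz]
  refine ⟨⟨fun x => if x ∈ SI V z hz v then Submodule.span k {u x} else ⊥, ?_⟩,
    ⟨fun x => Submodule.comap (V.map (hz x)) (Submodule.span k (B \ {v})), ?_⟩,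
    ?_, ?_, ?_, ?_⟩
  · -- `U` is a submodule
    intro x y h w hw
    by_cases hx : x ∈ SI V z hz v
    · rw [if_pos hx] at hw
      have hy : y ∈ SI V z hz v := SI_up V z hz v hx h
      rw [if_pos hy]
      obtain ⟨c, hc⟩ := Submodule.mem_span_singleton.mp hw
      rw [← hc, map_smul, hucompat h hx]
      exact Submodule.smul_mem _ _ (Submodule.mem_span_singleton_self _)
    · rw [if_neg hx, Submodule.mem_bot] at hw
      rw [hw, map_zero]
      exact Submodule.zero_mem _
  · -- `W` is a submodule
    intro x y h w hw
    rw [Submodule.mem_comap] at hw ⊢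
    rw [V.mapc h (hz y) (hz x) w]
    exact hw
  · -- complementarity
    intro x
    show IsCompl (if x ∈ SI V z hz v then Submodule.span k {u x} else ⊥)
      (Submodule.comap (V.map (hz x)) (Submodule.span k (B \ {v})))
    by_cases hx : x ∈ SI V z hz v
    · rw [if_pos hx]
      constructor
      · rw [disjoint_iff_inf_le]
        intro w hw
        obtain ⟨hw1, hw2⟩ := Submodule.mem_inf.mp hw
        obtain ⟨c, hc⟩ := Submodule.mem_span_singleton.mp hw1
        rw [Submodule.mem_comap] at hw2
        have h0 : f (V.map (hz x) w) = 0 := hker hw2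
        rw [← hc, map_smul, huv x hx, map_smul, hfv, smul_eq_mul, mul_one] at h0
        rw [Submodule.mem_bot, ← hc, h0, zero_smul]
      · rw [codisjoint_iff_le_sup]
        intro w _
        refine Submodule.mem_sup.mpr ⟨f (V.map (hz x) w) • u x,
          Submodule.smul_mem _ _ (Submodule.mem_span_singleton_self _),
          w - f (V.map (hz x) w) • u x, ?_, by abel⟩
        rw [Submodule.mem_comap, map_sub, map_smul, huv x hx]
        exact hsub (V.map (hz x) w)
    · rw [if_neg hx]
      have hWtop : Submodule.comap (V.map (hz x))
          (Submodule.span k (B \ {v})) = ⊤ := by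
        rw [eq_top_iff]
        intro w _
        rw [Submodule.mem_comap]
        have hr : V.map (hz x) w ∈ LinearMap.range (V.map (hz x)) :=
          LinearMap.mem_range_self _ w
        rw [← hBcompat x (hz x)] at hr
        refine Submodule.span_mono ?_ hr
        rintro t ⟨htB, htr⟩
        refine ⟨htB, fun htv => hx ?_⟩
        rw [Set.mem_singleton_iff] at htv
        subst htv
        exact htr
      rw [hWtop]
      exact isCompl_bot_top
  · -- interval module
    have hIint : IsPosetInterval (SI V z hz v) := by
      refine ⟨⟨z, hzI⟩, fun a b c ha _ hab _ => SI_up V z hz v ha hab, ?_⟩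
      intro a ha c hc
      refine ⟨2, fun i => if i = 0 then a else if i = 1 then z else c, ?_, ?_, ?_, ?_⟩
      · intro i _
        dsimp only
        split_ifs
        · exact ha
        · exact hzI
        · exact hc
      · norm_num
      · norm_num
      · intro i hi
        interval_cases i
        · left; norm_num; exact hz a
        · right; norm_num; exact hz c
    refine isIntervalModule_of V _ (SI V z hz v) hIint
      (fun x => (f.comp (V.map (hz x))).comp (Submodule.subtype _)) ?_ ?_ ?_ ?_
    · intro x hx
      exact if_neg hx
    · intro x hx
      refine (injective_iff_map_eq_zero _).mpr ?_
      intro w hw0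
      have hw1 : (w : V.space x) ∈ Submodule.span k {u x} := by
        have h2 : (w : V.space x) ∈
            (if x ∈ SI V z hz v then Submodule.span k {u x} else ⊥) := w.2
        rwa [if_pos hx] at h2
      obtain ⟨c, hc⟩ := Submodule.mem_span_singleton.mp hw1
      have h0 : f (V.map (hz x) (w : V.space x)) = 0 := hw0
      rw [← hc, map_smul, huv x hx, map_smul, hfv, smul_eq_mul, mul_one] at h0
      refine Subtype.ext ?_
      show (w : V.space x) = 0
      rw [← hc, h0, zero_smul]
    · intro x hx t
      refine ⟨⟨t • u x, ?_⟩, ?_⟩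
      · show t • u x ∈ (if x ∈ SI V z hz v then Submodule.span k {u x} else ⊥)
        rw [if_pos hx]
        exact Submodule.smul_mem _ _ (Submodule.mem_span_singleton_self _)
      · show f (V.map (hz x) (t • u x)) = t
        rw [map_smul, huv x hx, map_smul, hfv, smul_eq_mul, mul_one]
    · intro x y h w
      show f (V.map (hz y) (V.map h (w : V.space x))) = f (V.map (hz x) (w : V.space x))
      rw [V.mapc h (hz y) (hz x) (w : V.space x)]
  · -- `U` at `z`
    show (if z ∈ SI V z hz v then Submodule.span k {u z} else ⊥) = Submodule.span k {v}
    rw [if_pos hzI, huz]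
  · -- `W` at `z`
    show Submodule.comap (V.map (hz z)) (Submodule.span k (B \ {v}))
      = Submodule.span k (B \ {v})
    rw [show (V.map (hz z)) = LinearMap.id from V.map_id z, Submodule.comap_id]
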